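/- Let V be a Hilbert space, W ⊆ V a closed subspace, and 𝔞 : V × V → ℂ a bounded sesquilinear form such that the operator 𝓛 : W → W' defined by ⟨𝓛h, g⟩ = 𝔞(h,g) for h,g ∈ W is invertible. Then V decomposes as a direct sum V = V_H ⊕ W, where V_H = { u ∈ V : 𝔞(u,g) = 0 for all g ∈ W }. -/
import Mathlib


/- STATEMENT 1: If `V` is a Hilbert space, `W ⊆ V` a closed subspace and `𝔞` a bounded
sesquilinear form on `V` (linear in the first, conjugate-linear in the second variable)
such that the induced operator `𝓛 : W → W'` into the anti-dual, `⟨𝓛h, g⟩ = 𝔞(h,g)`, is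
invertible, then `V = V_H ⊕ W` where `V_H = {u ∈ V : 𝔞(u,g) = 0 ∀ g ∈ W}`.
Invertibility of `𝓛 : W → W'` is expressed, via the Riesz anti-dual identification of the
Hilbert space `W`, as the existence of a continuous linear equivalence `T : W ≃L W` with
`𝔞(h,g) = ⟪g, T h⟫` for all `h, g ∈ W`. -/

open scoped InnerProductSpace

theorem decomposition_VH_oplus_W
    {V : Type*} [NormedAddCommGroup V] [InnerProductSpace ℂ V] [CompleteSpace V]
    (W : Submodule ℂ V) (hW : IsClosed (W : Set V))
    (a : V → V → ℂ)
    -- `a` is sesquilinear: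
    (ha1 : ∀ v, IsLinearMap ℂ fun u => a u v)
    (ha2 : ∀ u v w : V, a u (v + w) = a u v + a u w)
    (ha3 : ∀ (c : ℂ) (u v : V), a u (c • v) = starRingEnd ℂ c * a u v)
    -- `a` is bounded:
    (C : ℝ) (hbound : ∀ u v, ‖a u v‖ ≤ C * ‖u‖ * ‖v‖)
    -- the operator `𝓛 : W → W'`, `⟨𝓛h, g⟩ = 𝔞(h,g)`, is invertible:
    (T : W ≃L[ℂ] W) (hT : ∀ h g : W, a (h : V) (g : V) = ⟪(g : V), ((T h : W) : V)⟫_ℂ) :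
    ∀ u : V, ∃! p : V × V,
      (∀ g ∈ W, a p.1 g = 0) ∧ p.2 ∈ W ∧ u = p.1 + p.2 := by
  haveI : CompleteSpace W := hW.completeSpace_coe
  intro u
  -- the functional g ↦ conj (a u g) on W
  have flin : IsLinearMap ℂ (fun g : W => (starRingEnd ℂ) (a u (g : V))) := by
    constructor
    · intro x y
      simp [ha2, map_add]
    · intro c x
      simp only [Submodule.coe_smul, ha3, map_mul, RingHom.id_apply]
      simp [smul_eq_mul]
  let fL : W →L[ℂ] ℂ := LinearMap.mkContinuous (IsLinearMap.mk' _ flin) (C * ‖u‖)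
    (by
      intro g
      simp only [IsLinearMap.mk'_apply, RCLike.norm_conj]
      exact hbound u g)
  set y : W := (InnerProductSpace.toDual ℂ W).symm fL with hy
  have hyg : ∀ g : W, a u (g : V) = ⟪(g : V), (y : V)⟫_ℂ := by
    intro g
    have := InnerProductSpace.toDual_symm_apply (𝕜 := ℂ) (E := W) (x := g) (y := fL)
    rw [← hy] at this
    have h2 : ⟪y, g⟫_ℂ = (starRingEnd ℂ) (a u (g : V)) := this
    have h3 := congrArg (starRingEnd ℂ) h2
    rw [Complex.conj_conj] at h3
    rw [← h3, ← inner_conj_symm, Complex.conj_conj]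
    simp [Submodule.coe_inner]
  set h : W := T.symm y with hh
  have hhg : ∀ g : W, a (h : V) (g : V) = a u (g : V) := by
    intro g
    rw [hT h g, hyg g, hh, T.apply_symm_apply]
  refine ⟨(u - (h : V), (h : V)), ⟨?_, h.2, by rw [sub_add_cancel]⟩, ?_⟩
  · intro g hg
    have hsub := (IsLinearMap.mk' _ (ha1 g)).map_sub u (h : V)
    simp only [IsLinearMap.mk'_apply] at hsub
    rw [hsub, hhg ⟨g, hg⟩, sub_self]
  · rintro ⟨q1, q2⟩ ⟨hq1, hq2, hqsum⟩
    -- d := q2 - h ∈ W and a d g = 0 for all g ∈ W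
    have hd : q2 - (h : V) = (u - (h : V)) - q1 := by
      rw [hqsum]; abel
    have hdW : q2 - (h : V) ∈ W := W.sub_mem hq2 h.2
    have hda : ∀ g ∈ W, a (q2 - (h : V)) g = 0 := by
      intro g hg
      rw [hd]
      have hsub := (IsLinearMap.mk' _ (ha1 g)).map_sub (u - (h : V)) q1
      simp only [IsLinearMap.mk'_apply] at hsub
      rw [hsub, hq1 g hg]
      have hsub2 := (IsLinearMap.mk' _ (ha1 g)).map_sub u (h : V)
      simp only [IsLinearMap.mk'_apply] at hsub2
      rw [hsub2, hhg ⟨g, hg⟩, sub_self, sub_zero]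
    set d : W := ⟨q2 - (h : V), hdW⟩ with hdd
    have hTd : T d = 0 := by
      have := hda _ (T d).2
      rw [show ((T d : W) : V) = (((T d : W) : V)) from rfl] at this
      have h0 : a (d : V) ((T d : W) : V) = 0 := this
      rw [hT d (T d)] at h0
      exact inner_self_eq_zero.mp h0
    have hd0 : d = 0 := by
      have := congrArg T.symm hTd
      simpa using this
    have hq2h : q2 = (h : V) := by
      have : q2 - (h : V) = 0 := congrArg Subtype.val hd0
      exact sub_eq_zero.mp this
    have hq1h : q1 = u - (h : V) := by
      rw [hqsum, hq2h]; abel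
    exact Prod.ext hq1h hq2h
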